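/- There exist complex scalars c₁, c₂, d₁, d₂ such that B₂(z₁)·p₁ = c₁ • p̃₁, A·B̃₂(ζ₁)·A⁻¹·p₁ = c₂ • p̃₁, B̃₁(z₂)·p̃₂ = d₁ • p₂, and A·B₁(ζ₂)·A⁻¹·p̃₂ = d₂ • p₂. In other words, up to normalization the column vectors of the refactorized rank-one parts are [p̃₁] = [B₂(z₁)p₁] = [A·B̃₂(ζ₁)·A⁻¹·p₁] and [p₂] = [B̃₁(z₂)p̃₂] = [A·B₁(ζ₂)·A⁻¹·p̃₂]. -/

import Mathlib

open Matrix

/-- If `v * q = p * w` as outer products and `q ≠ 0`, then `v` is a multiple of `p`. -/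
lemma outer_col {r : ℕ} (v p : Matrix (Fin r) (Fin 1) ℂ) (q w : Matrix (Fin 1) (Fin r) ℂ)
    (hq : q ≠ 0) (h : v * q = p * w) : ∃ c : ℂ, v = c • p := by
  have hex : ∃ j, q 0 j ≠ 0 := by
    by_contra hc
    push_neg at hc
    apply hq
    ext i j
    have hi : i = 0 := Subsingleton.elim _ _
    subst hi
    simpa using hc j
  obtain ⟨j, hj⟩ := hex
  refine ⟨w 0 j / q 0 j, ?_⟩
  ext i k
  have hk : k = 0 := Subsingleton.elim _ _
  subst hk
  have h2 := congrFun (congrFun h i) j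
  simp only [Matrix.mul_apply, Fin.sum_univ_one] at h2
  simp only [Matrix.smul_apply, smul_eq_mul]
  field_simp
  linear_combination h2

/-- Kernel of an invertible-plus-rank-one matrix is spanned by `A⁻¹ p`. -/
lemma ker_rank_one {r : ℕ} (A : Matrix (Fin r) (Fin r) ℂ) (hA : IsUnit A.det) (c : ℂ)
    (p v : Matrix (Fin r) (Fin 1) ℂ) (q : Matrix (Fin 1) (Fin r) ℂ)
    (h : (A + c • (p * q)) * v = 0) : ∃ s : ℂ, v = s • (A⁻¹ * p) := by
  refine ⟨-(c * (q * v) 0 0), ?_⟩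
  have h1 : A * v + c • (p * (q * v)) = 0 := by
    rw [Matrix.add_mul, Matrix.smul_mul, Matrix.mul_assoc] at h
    exact h
  have h3 : p * (q * v) = ((q * v) 0 0) • p := by
    ext i k
    have hk : k = 0 := Subsingleton.elim _ _
    subst hk
    simp [Matrix.mul_apply, Fin.sum_univ_one, mul_comm]
  have h2 : A * v = (-(c * (q * v) 0 0)) • p := by
    rw [h3] at h1
    have := eq_neg_of_add_eq_zero_left h1
    rw [this]
    rw [smul_smul]
    simp
  calc v = A⁻¹ * (A * v) := (Matrix.nonsing_inv_mul_cancel_left A v hA).symm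
    _ = (-(c * (q * v) 0 0)) • (A⁻¹ * p) := by rw [h2, Matrix.mul_smul]

/-- The vector `A⁻¹ p` is in the kernel of the elementary divisor at its zero. -/
lemma ker_vec {r : ℕ} (A : Matrix (Fin r) (Fin r) ℂ) (hA : IsUnit A.det) (z ζ : ℂ)
    (hzζ : z ≠ ζ) (p : Matrix (Fin r) (Fin 1) ℂ) (q : Matrix (Fin 1) (Fin r) ℂ)
    (ht : (p * q * A⁻¹).trace = z - ζ) :
    (A + (ζ - z)⁻¹ • (p * q)) * (A⁻¹ * p) = 0 := by
  have ht1 : q * A⁻¹ * p = (z - ζ) • (1 : Matrix (Fin 1) (Fin 1) ℂ) := by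
    have e1 : (p * q * A⁻¹).trace = (q * A⁻¹ * p).trace := by
      rw [Matrix.mul_assoc, Matrix.trace_mul_comm, Matrix.mul_assoc]
    rw [e1] at ht
    ext i j
    have hi : i = 0 := Subsingleton.elim _ _
    have hj : j = 0 := Subsingleton.elim _ _
    subst hi; subst hj
    rw [Matrix.trace_fin_one] at ht
    simp [ht]
  have hne : ζ - z ≠ 0 := sub_ne_zero.mpr (Ne.symm hzζ)
  rw [Matrix.add_mul, Matrix.mul_nonsing_inv_cancel_left A p hA, Matrix.smul_mul]
  have e2 : p * q * (A⁻¹ * p) = (z - ζ) • p := by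
    rw [Matrix.mul_assoc p q, ← Matrix.mul_assoc q, ht1]
    rw [Matrix.mul_smul, Matrix.mul_one]
  rw [e2, smul_smul]
  have e3 : (ζ - z)⁻¹ * (z - ζ) = -1 := by
    field_simp
    ring
  rw [e3]
  simp

/-- From an affine identity at two distinct points, both coefficients vanish. -/
lemma affine_zero {r : ℕ} {M N : Matrix (Fin r) (Fin r) ℂ} {a b : ℂ} (hab : a ≠ b)
    (h1 : a • M + N = 0) (h2 : b • M + N = 0) : M = 0 ∧ N = 0 := by
  have hM : (a - b) • M = 0 := by
    have := sub_eq_zero.mpr (h1.trans h2.symm)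
    rw [add_sub_add_right_eq_sub, ← sub_smul] at this
    exact this
  have hab' : a - b ≠ 0 := sub_ne_zero.mpr hab
  have hM0 : M = 0 := by
    rcases smul_eq_zero.mp hM with h | h
    · exact absurd h hab'
    · exact h
  refine ⟨hM0, ?_⟩
  rw [hM0, smul_zero, zero_add] at h1
  exact h1

/-- Column vectors of the refactorized rank-one parts, up to normalization:
`[p̃₁] = [B₂(z₁)p₁] = [A B̃₂(ζ₁) A⁻¹ p₁]` and `[p₂] = [B̃₁(z₂)p̃₂] = [A B₁(ζ₂) A⁻¹ p̃₂]`. -/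
theorem refactorization_columns
    (r : ℕ) (hr : 1 ≤ r)
    (A : Matrix (Fin r) (Fin r) ℂ) (hA : IsUnit A.det)
    (z₁ z₂ ζ₁ ζ₂ : ℂ)
    (h12 : z₁ ≠ z₂) (h1a : z₁ ≠ ζ₁) (h1b : z₁ ≠ ζ₂)
    (h2a : z₂ ≠ ζ₁) (h2b : z₂ ≠ ζ₂) (hab : ζ₁ ≠ ζ₂)
    (p₁ p₂ pt₁ pt₂ : Matrix (Fin r) (Fin 1) ℂ)
    (q₁ q₂ qt₁ qt₂ : Matrix (Fin 1) (Fin r) ℂ)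
    (hp₁ : p₁ ≠ 0) (hp₂ : p₂ ≠ 0) (hpt₁ : pt₁ ≠ 0) (hpt₂ : pt₂ ≠ 0)
    (hq₁ : q₁ ≠ 0) (hq₂ : q₂ ≠ 0) (hqt₁ : qt₁ ≠ 0) (hqt₂ : qt₂ ≠ 0)
    (hζ₁ : (p₁ * q₁ * A⁻¹).trace = z₁ - ζ₁)
    (hζt₁ : (pt₁ * qt₁ * A⁻¹).trace = z₁ - ζ₁)
    (hζ₂ : (p₂ * q₂ * A⁻¹).trace = z₂ - ζ₂)
    (hζt₂ : (pt₂ * qt₂ * A⁻¹).trace = z₂ - ζ₂)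
    (hre : ∀ z : ℂ, z ≠ z₁ → z ≠ z₂ →
      (A + (z - z₂)⁻¹ • (p₂ * q₂)) * (A + (z - z₁)⁻¹ • (p₁ * q₁)) =
      (A + (z - z₁)⁻¹ • (pt₁ * qt₁)) * (A + (z - z₂)⁻¹ • (pt₂ * qt₂))) :
    ∃ c₁ c₂ d₁ d₂ : ℂ,
      (A + (z₁ - z₂)⁻¹ • (p₂ * q₂)) * p₁ = c₁ • pt₁ ∧
      A * (A + (ζ₁ - z₂)⁻¹ • (pt₂ * qt₂)) * A⁻¹ * p₁ = c₂ • pt₁ ∧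
      (A + (z₂ - z₁)⁻¹ • (pt₁ * qt₁)) * pt₂ = d₁ • p₂ ∧
      A * (A + (ζ₂ - z₁)⁻¹ • (p₁ * q₁)) * A⁻¹ * pt₂ = d₂ • p₂ := by
  -- abbreviations for the affine-in-z identity
  set M : Matrix (Fin r) (Fin r) ℂ :=
    ((p₂ * q₂) * A - A * (pt₂ * qt₂)) + (A * (p₁ * q₁) - (pt₁ * qt₁) * A) with hMdef
  set N : Matrix (Fin r) (Fin r) ℂ :=
    (p₂ * q₂) * (p₁ * q₁) - (pt₁ * qt₁) * (pt₂ * qt₂)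
      - z₁ • ((p₂ * q₂) * A - A * (pt₂ * qt₂))
      - z₂ • (A * (p₁ * q₁) - (pt₁ * qt₁) * A) with hNdef
  have hlin : ∀ z : ℂ, z ≠ z₁ → z ≠ z₂ → z • M + N = 0 := by
    intro z hz1 hz2
    have h := hre z hz1 hz2
    have hz1' : z - z₁ ≠ 0 := sub_ne_zero.mpr hz1
    have hz2' : z - z₂ ≠ 0 := sub_ne_zero.mpr hz2
    have e : z • M + N = ((z - z₁) * (z - z₂)) •
        ((A + (z - z₂)⁻¹ • (p₂ * q₂)) * (A + (z - z₁)⁻¹ • (p₁ * q₁)) -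
         (A + (z - z₁)⁻¹ • (pt₁ * qt₁)) * (A + (z - z₂)⁻¹ • (pt₂ * qt₂))) := by
      rw [hMdef, hNdef]
      simp only [Matrix.add_mul, Matrix.mul_add, smul_mul_assoc, mul_smul_comm, smul_smul]
      match_scalars <;> field_simp <;> ring
    rw [h, sub_self, smul_zero] at e
    exact e
  obtain ⟨hM, hN⟩ := affine_zero hab
    (hlin ζ₁ (Ne.symm h1a) (Ne.symm h2a)) (hlin ζ₂ (Ne.symm h1b) (Ne.symm h2b))
  have h12' : z₁ - z₂ ≠ 0 := sub_ne_zero.mpr h12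
  have h21' : z₂ - z₁ ≠ 0 := sub_ne_zero.mpr (Ne.symm h12)
  -- identity at z = z₁
  have hz1id : (A + (z₁ - z₂)⁻¹ • (p₂ * q₂)) * (p₁ * q₁) =
      (pt₁ * qt₁) * (A + (z₁ - z₂)⁻¹ • (pt₂ * qt₂)) := by
    have h0 : z₁ • M + N = 0 := by rw [hM, hN]; simp
    have e2 : (A + (z₁ - z₂)⁻¹ • (p₂ * q₂)) * (p₁ * q₁) -
        (pt₁ * qt₁) * (A + (z₁ - z₂)⁻¹ • (pt₂ * qt₂)) = (z₁ - z₂)⁻¹ • (z₁ • M + N) := by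
      rw [hMdef, hNdef]
      simp only [Matrix.add_mul, Matrix.mul_add, smul_mul_assoc, mul_smul_comm, smul_smul]
      match_scalars <;> field_simp <;> ring
    rw [h0, smul_zero] at e2
    exact sub_eq_zero.mp e2
  -- identity at z = z₂
  have hz2id : (p₂ * q₂) * (A + (z₂ - z₁)⁻¹ • (p₁ * q₁)) =
      (A + (z₂ - z₁)⁻¹ • (pt₁ * qt₁)) * (pt₂ * qt₂) := by
    have h0 : z₂ • M + N = 0 := by rw [hM, hN]; simp
    have e2 : (p₂ * q₂) * (A + (z₂ - z₁)⁻¹ • (p₁ * q₁)) -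
        (A + (z₂ - z₁)⁻¹ • (pt₁ * qt₁)) * (pt₂ * qt₂) = (z₂ - z₁)⁻¹ • (z₂ • M + N) := by
      rw [hMdef, hNdef]
      simp only [Matrix.add_mul, Matrix.mul_add, smul_mul_assoc, mul_smul_comm, smul_smul]
      match_scalars <;> field_simp <;> ring
    rw [h0, smul_zero] at e2
    exact sub_eq_zero.mp e2
  -- c₁
  obtain ⟨c₁, hc₁⟩ := outer_col ((A + (z₁ - z₂)⁻¹ • (p₂ * q₂)) * p₁) pt₁ q₁
    (qt₁ * (A + (z₁ - z₂)⁻¹ • (pt₂ * qt₂))) hq₁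
    (by rw [Matrix.mul_assoc, hz1id, Matrix.mul_assoc])
  -- d₁
  obtain ⟨d₁, hd₁⟩ := outer_col ((A + (z₂ - z₁)⁻¹ • (pt₁ * qt₁)) * pt₂) p₂ qt₂
    (q₂ * (A + (z₂ - z₁)⁻¹ • (p₁ * q₁))) hqt₂
    (by rw [Matrix.mul_assoc, ← hz2id, Matrix.mul_assoc])
  -- c₂
  have hk1 : (A + (ζ₁ - z₁)⁻¹ • (p₁ * q₁)) * (A⁻¹ * p₁) = 0 :=
    ker_vec A hA z₁ ζ₁ h1a p₁ q₁ hζ₁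
  have hH1 := hre ζ₁ (Ne.symm h1a) (Ne.symm h2a)
  have h01 : (A + (ζ₁ - z₁)⁻¹ • (pt₁ * qt₁)) *
      ((A + (ζ₁ - z₂)⁻¹ • (pt₂ * qt₂)) * (A⁻¹ * p₁)) = 0 := by
    rw [← Matrix.mul_assoc, ← hH1, Matrix.mul_assoc, hk1, Matrix.mul_zero]
  obtain ⟨c₂, hc₂⟩ := ker_rank_one A hA ((ζ₁ - z₁)⁻¹) pt₁
    ((A + (ζ₁ - z₂)⁻¹ • (pt₂ * qt₂)) * (A⁻¹ * p₁)) qt₁ h01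
  -- d₂
  have hk2 : (A + (ζ₂ - z₂)⁻¹ • (pt₂ * qt₂)) * (A⁻¹ * pt₂) = 0 :=
    ker_vec A hA z₂ ζ₂ h2b pt₂ qt₂ hζt₂
  have hH2 := hre ζ₂ (Ne.symm h1b) (Ne.symm h2b)
  have h02 : (A + (ζ₂ - z₂)⁻¹ • (p₂ * q₂)) *
      ((A + (ζ₂ - z₁)⁻¹ • (p₁ * q₁)) * (A⁻¹ * pt₂)) = 0 := by
    rw [← Matrix.mul_assoc, hH2, Matrix.mul_assoc, hk2, Matrix.mul_zero]
  obtain ⟨d₂, hd₂⟩ := ker_rank_one A hA ((ζ₂ - z₂)⁻¹) p₂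
    ((A + (ζ₂ - z₁)⁻¹ • (p₁ * q₁)) * (A⁻¹ * pt₂)) q₂ h02
  refine ⟨c₁, c₂, d₁, d₂, hc₁, ?_, hd₁, ?_⟩
  · rw [Matrix.mul_assoc, Matrix.mul_assoc, ← Matrix.mul_assoc (A + (ζ₁ - z₂)⁻¹ • (pt₂ * qt₂)),
      Matrix.mul_assoc (A + (ζ₁ - z₂)⁻¹ • (pt₂ * qt₂)), hc₂, Matrix.mul_smul,
      Matrix.mul_nonsing_inv_cancel_left A pt₁ hA]
  · rw [Matrix.mul_assoc, Matrix.mul_assoc, ← Matrix.mul_assoc (A + (ζ₂ - z₁)⁻¹ • (p₁ * q₁)),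
      Matrix.mul_assoc (A + (ζ₂ - z₁)⁻¹ • (p₁ * q₁)), hd₂, Matrix.mul_smul,
      Matrix.mul_nonsing_inv_cancel_left A p₂ hA]
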